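/- Monotonicity of the optimal finite-horizon cost in the initial state (genie lemma): let ξ′ and ξ″ be independent square-integrable real random variables with E[ξ′] = 0, both independent of the noise sequences. Consider two copies of the dynamics driven by the same noise sequences, the first with initial state X0 = ξ′ + ξ″ and the second with initial state X0 = ξ′. Then for every horizon N ≥ 1 and all weights q, r1, r2 ≥ 0, the infimum over causal strategy pairs of (1/N)·Σ_{n=0}^{N−1} ( q·E[x²[n]] + r1·E[u1²[n]] + r2·E[u2²[n]] ) for the first system is greater than or equal to the corresponding infimum for the second system. -/

import Mathlib

open MeasureTheory ProbabilityTheory Filter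
open scoped ENNReal NNReal

noncomputable section

namespace LQG

/-- Round-to-nearest quantization of `y` to the lattice `c·ℤ`. -/
def quant (c y : ℝ) : ℝ := c * ⌊y / c + 1 / 2⌋

/-- Remainder of `y` under round-to-nearest quantization to the lattice `c·ℤ`. -/
def remq (c y : ℝ) : ℝ := y - quant c y

variable {Ω : Type} [MeasurableSpace Ω]

/-- Second moment `E[f²]`, valued in `[0,∞]`. -/
def sqE (μ : Measure Ω) (f : Ω → ℝ) : ℝ≥0∞ := ∫⁻ ω, ENNReal.ofReal ((f ω) ^ 2) ∂μ

/-- `u` is a causal (Borel-measurable) function of the observation process `g`: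
for each `n`, `u n` is a measurable function of `(g 0, …, g n)`. -/
def Causal (u g : ℕ → Ω → ℝ) : Prop :=
  ∀ n : ℕ, ∃ f : (Fin (n + 1) → ℝ) → ℝ, Measurable f ∧ ∀ ω, u n ω = f fun i => g i ω

/-- The closed-loop equations of the two-controller scalar system with initial state `x0`,
disturbances `w`, observation noises `v1, v2`, state `x`, inputs `u1, u2` and
observations `y1, y2`; both controllers are causal. -/
structure ClosedLoop (a : ℝ) (x0 : Ω → ℝ) (w v1 v2 : ℕ → Ω → ℝ)
    (x u1 u2 y1 y2 : ℕ → Ω → ℝ) : Prop where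
  init : ∀ ω, x 0 ω = x0 ω
  dyn : ∀ n ω, x (n + 1) ω = a * x n ω + u1 n ω + u2 n ω + w n ω
  obs1 : ∀ n ω, y1 n ω = x n ω + v1 n ω
  obs2 : ∀ n ω, y2 n ω = x n ω + v2 n ω
  causal1 : Causal u1 y1
  causal2 : Causal u2 y2

/-- Infinite-horizon average cost `J`, valued in `[0,∞]`. -/
def avgCost (μ : Measure Ω) (q r1 r2 : ℝ) (x u1 u2 : ℕ → Ω → ℝ) : ℝ≥0∞ :=
  Filter.limsup
    (fun N : ℕ =>
      (∑ n ∈ Finset.range N,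
          (ENNReal.ofReal q * sqE μ (x n) + ENNReal.ofReal r1 * sqE μ (u1 n) +
            ENNReal.ofReal r2 * sqE μ (u2 n))) / (N : ℝ≥0∞))
    Filter.atTop

/-- The two memoryless linear (bang-bang) strategy pairs `L_lin,bb`. -/
def LinBB (a : ℝ) (u1 u2 y1 y2 : ℕ → Ω → ℝ) : Prop :=
  ((∀ n ω, u1 n ω = -a * y1 n ω) ∧ ∀ n ω, u2 n ω = 0) ∨
    ((∀ n ω, u1 n ω = 0) ∧ ∀ n ω, u2 n ω = -a * y2 n ω)

/-- The `s`-stage signaling strategy family `L_sig,s`, parametrized by `d > 0`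
(with the convention that `u2` at negative times is `0`). -/
def Sig (a : ℝ) (s : ℕ) (u1 u2 y1 y2 : ℕ → Ω → ℝ) : Prop :=
  ∃ d : ℝ, 0 < d ∧
    (∀ n ω, u1 n ω = -a * remq d (y1 n ω)) ∧
    ∀ n ω, u2 n ω =
      -a * (quant (a ^ s * d)
              (y2 n ω - remq (a ^ s * d)
                (∑ i ∈ Finset.Icc 1 s, if i ≤ n then a ^ (i - 1) * u2 (n - i) ω else 0)) +
            remq (a ^ s * d)
              (∑ i ∈ Finset.Icc 1 s, if i ≤ n then a ^ (i - 1) * u2 (n - i) ω else 0))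

/-- The family of all the primitive random variables, for stating mutual independence. -/
def noise (x0 : Ω → ℝ) (w v1 v2 : ℕ → Ω → ℝ) : Option (ℕ × Fin 3) → Ω → ℝ := fun j =>
  j.elim x0 fun p => if p.2 = 0 then w p.1 else if p.2 = 1 then v1 p.1 else v2 p.1

/-- The standing stochastic assumptions: `x0 ~ N(0, V0)`, `w n ~ N(0,1)` i.i.d.,
`v1 n ~ N(0, V1)` i.i.d., `v2 n ~ N(0, V2)` i.i.d., all mutually independent. -/
def GaussSetup (μ : Measure Ω) (V0 V1 V2 : ℝ) (x0 : Ω → ℝ) (w v1 v2 : ℕ → Ω → ℝ) : Prop :=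
  Measurable x0 ∧ (∀ n, Measurable (w n)) ∧ (∀ n, Measurable (v1 n)) ∧
    (∀ n, Measurable (v2 n)) ∧
    Measure.map x0 μ = gaussianReal 0 (Real.toNNReal V0) ∧
    (∀ n, Measure.map (w n) μ = gaussianReal 0 1) ∧
    (∀ n, Measure.map (v1 n) μ = gaussianReal 0 (Real.toNNReal V1)) ∧
    (∀ n, Measure.map (v2 n) μ = gaussianReal 0 (Real.toNNReal V2)) ∧
    iIndepFun (noise x0 w v1 v2) μ

/-- The set of achievable infinite-horizon average costs over closed-loop strategy pairs
satisfying the strategy-class predicate `P`. -/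
def costSet (μ : Measure Ω) (a q r1 r2 : ℝ) (x0 : Ω → ℝ) (w v1 v2 : ℕ → Ω → ℝ)
    (P : (ℕ → Ω → ℝ) → (ℕ → Ω → ℝ) → (ℕ → Ω → ℝ) → (ℕ → Ω → ℝ) → Prop) : Set ℝ≥0∞ :=
  {J | ∃ x u1 u2 y1 y2 : ℕ → Ω → ℝ,
    ClosedLoop a x0 w v1 v2 x u1 u2 y1 y2 ∧ P u1 u2 y1 y2 ∧ J = avgCost μ q r1 r2 x u1 u2}

end LQG

namespace LQG

/-- The average finite-horizon cost over horizon `N`, valued in `[0,∞]`. -/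
def finCost {Ω : Type} [MeasurableSpace Ω] (μ : Measure Ω) (q r1 r2 : ℝ) (N : ℕ)
    (x u1 u2 : ℕ → Ω → ℝ) : ℝ≥0∞ :=
  (∑ n ∈ Finset.range N,
      (ENNReal.ofReal q * sqE μ (x n) + ENNReal.ofReal r1 * sqE μ (u1 n) +
        ENNReal.ofReal r2 * sqE μ (u2 n))) / (N : ℝ≥0∞)

/-- The set of achievable average finite-horizon costs over causal closed-loop strategy
pairs, for a general (square-integrable) initial state `X0`. -/
def finCostSet {Ω : Type} [MeasurableSpace Ω] (μ : Measure Ω) (a q r1 r2 : ℝ) (N : ℕ)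
    (X0 : Ω → ℝ) (w v1 v2 : ℕ → Ω → ℝ) : Set ℝ≥0∞ :=
  {J | ∃ x u1 u2 y1 y2 : ℕ → Ω → ℝ,
    ClosedLoop a X0 w v1 v2 x u1 u2 y1 y2 ∧ J = finCost μ q r1 r2 N x u1 u2}

/-- The family consisting of the two initial-state components and all the noise
variables, for stating mutual independence. -/
def genieFamily {Ω : Type} (ξ' ξ'' : Ω → ℝ) (w v1 v2 : ℕ → Ω → ℝ) :
    Bool ⊕ (ℕ × Fin 3) → Ω → ℝ := fun j =>
  Sum.elim (fun b => if b then ξ' else ξ'')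
    (fun p => if p.2 = 0 then w p.1 else if p.2 = 1 then v1 p.1 else v2 p.1) j

end LQG
namespace LQG

section Helpers

variable {Ω : Type} [MeasurableSpace Ω] {μ : Measure Ω}

lemma integrable_mul_pdf : Integrable (fun x : ℝ => x * gaussianPDFReal 0 1 x) := by
  have h := integrable_rpow_mul_exp_neg_mul_sq (b := 2⁻¹) (by norm_num) (s := 1) (by norm_num)
  simp only [Real.rpow_one] at h
  have h2 := h.const_mul ((Real.sqrt (2 * Real.pi * (1 : ℝ≥0)))⁻¹)
  refine h2.congr ?_
  filter_upwards with x
  rw [gaussianPDFReal]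
  push_cast
  ring_nf

lemma integrable_id_gauss : Integrable (fun x : ℝ => x) (gaussianReal 0 1) := by
  rw [gaussianReal_of_var_ne_zero _ one_ne_zero]
  rw [integrable_withDensity_iff (measurable_gaussianPDF 0 1)
    (Filter.Eventually.of_forall fun x => ENNReal.ofReal_lt_top)]
  refine integrable_mul_pdf.congr ?_
  filter_upwards with x
  rw [gaussianPDF, ENNReal.toReal_ofReal (gaussianPDFReal_nonneg _ _ _)]

lemma map_neg_gauss : (gaussianReal 0 1).map (fun x : ℝ => -x) = gaussianReal 0 1 := by
  have h := gaussianReal_map_const_mul (μ := 0) (v := 1) (-1)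
  simp only [neg_one_mul, mul_zero] at h
  convert h using 2
  ext
  norm_num

lemma integral_id_gauss : ∫ x, x ∂(gaussianReal 0 1) = 0 := by
  have h : ∫ x, x ∂(gaussianReal 0 1) = ∫ x, x ∂((gaussianReal 0 1).map (fun x : ℝ => -x)) := by
    rw [map_neg_gauss]
  have h2 : ∫ x, x ∂((gaussianReal 0 1).map (fun x : ℝ => -x))
      = ∫ x, (fun y : ℝ => y) (-x) ∂(gaussianReal 0 1) :=
    integral_map measurable_neg.aemeasurable aestronglyMeasurable_id
  rw [h2, integral_neg] at h
  linarith

lemma integrable_of_gauss01 {g : Ω → ℝ} (hg : Measurable g)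
    (h : Measure.map g μ = gaussianReal 0 1) : Integrable g μ := by
  have h0 : Integrable id (Measure.map g μ) := h ▸ integrable_id_gauss
  have h1 := (integrable_map_measure aestronglyMeasurable_id hg.aemeasurable).mp h0
  simpa [Function.comp] using h1

lemma integral_of_gauss01 {g : Ω → ℝ} (hg : Measurable g)
    (h : Measure.map g μ = gaussianReal 0 1) : ∫ ω, g ω ∂μ = 0 := by
  have h2 : ∫ x, (fun y : ℝ => y) x ∂(Measure.map g μ) = ∫ ω, (fun y : ℝ => y) (g ω) ∂μ :=
    integral_map hg.aemeasurable aestronglyMeasurable_id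
  rw [h] at h2
  rw [← h2, integral_id_gauss]

lemma sqE_eq_nnnorm (f : Ω → ℝ) : sqE μ f = ∫⁻ ω, (‖f ω‖₊ : ℝ≥0∞) ^ 2 ∂μ := by
  refine lintegral_congr fun ω => ?_
  show _ = ‖f ω‖ₑ ^ 2
  rw [Real.enorm_eq_ofReal_abs, ← ENNReal.ofReal_pow (abs_nonneg _), sq_abs]

lemma memℒp_two_of_sqE_ne_top {f : Ω → ℝ} (hf : AEStronglyMeasurable f μ)
    (h : sqE μ f ≠ ⊤) : MemLp f 2 μ := by
  rw [memLp_two_iff_integrable_sq hf]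
  have hm : AEStronglyMeasurable (fun x => f x ^ 2) μ := by
    have := hf.mul hf
    exact this.congr (Filter.Eventually.of_forall fun x => by simp [sq])
  refine ⟨hm, ?_⟩
  rw [hasFiniteIntegral_iff_ofReal (Filter.Eventually.of_forall fun x => sq_nonneg _)]
  exact lt_top_iff_ne_top.2 h

lemma integrable_of_sqE_ne_top [IsProbabilityMeasure μ] {f : Ω → ℝ}
    (hf : AEStronglyMeasurable f μ) (h : sqE μ f ≠ ⊤) : Integrable f μ :=
  (memℒp_two_of_sqE_ne_top hf h).integrable one_le_two

lemma center_le [IsProbabilityMeasure μ] {f : Ω → ℝ} (hf : AEStronglyMeasurable f μ) :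
    sqE μ (fun ω => f ω - ∫ x, f x ∂μ) ≤ sqE μ f := by
  rw [sqE_eq_nnnorm, sqE_eq_nnnorm]
  have h1 : ∫⁻ ω, (‖f ω - ∫ x, f x ∂μ‖₊ : ℝ≥0∞) ^ 2 ∂μ = evariance f μ := rfl
  rw [h1, evariance_def' hf]
  exact tsub_le_self

lemma center2_le [IsProbabilityMeasure μ] {g h : Ω → ℝ} (hg : AEStronglyMeasurable g μ)
    (hh : AEStronglyMeasurable h μ) :
    sqE μ (fun ω => h ω + ((∫ x, g x ∂μ) - ∫ x, (g x + h x) ∂μ)) ≤ sqE μ h := by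
  by_cases hih : Integrable h μ
  · by_cases hig : Integrable g μ
    · have hsum : Integrable (fun x => g x + h x) μ := hig.add hih
      have he : (∫ x, (g x + h x) ∂μ) = (∫ x, g x ∂μ) + ∫ x, h x ∂μ := integral_add hig hih
      have : (fun ω => h ω + ((∫ x, g x ∂μ) - ∫ x, (g x + h x) ∂μ))
          = fun ω => h ω - ∫ x, h x ∂μ := by
        funext ω; rw [he]; ring
      rw [this]
      exact center_le hh
    · have hnsum : ¬ Integrable (fun x => g x + h x) μ := by
        intro hsum
        have h2 := hsum.sub hih
        have h3 : ((fun x => g x + h x) - h) = g := by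
          funext z
          simp [Pi.sub_apply]
        rw [h3] at h2
        exact hig h2
      rw [integral_undef hig, integral_undef hnsum]
      simp
  · have htop : sqE μ h = ⊤ := by
      by_contra hne
      exact hih (integrable_of_sqE_ne_top hh hne)
    rw [htop]
    exact le_top

lemma exists_le_lintegral {α : Type*} [MeasurableSpace α] [Nonempty α] (P : Measure α)
    [IsProbabilityMeasure P] {f : α → ℝ≥0∞} (hf : AEMeasurable f P) :
    ∃ c, f c ≤ ∫⁻ x, f x ∂P := by
  by_contra hcon
  push_neg at hcon
  rcases eq_top_or_lt_top (∫⁻ x, f x ∂P) with htop | hlt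
  · exact absurd (htop ▸ hcon (Classical.arbitrary α)) (by simp)
  · have hstrict : ∫⁻ _, (∫⁻ x, f x ∂P) ∂P < ∫⁻ x, f x ∂P := by
      have := lintegral_strict_mono (μ := P) (f := fun _ => ∫⁻ x, f x ∂P) (g := f)
        (by simp [IsProbabilityMeasure.ne_zero]) hf
        (by simpa using hlt.ne) (Filter.Eventually.of_forall hcon)
      simpa using this
    simp at hstrict

end Helpers

section Sol

variable {Ω : Type} [MeasurableSpace Ω]
variable (a : ℝ) (f1 f2 : (n : ℕ) → (Fin (n + 1) → ℝ) → ℝ)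

/-- history of the closed-loop solution map -/
def hist (p : ℝ × (ℕ → ℝ) × (ℕ → ℝ) × (ℕ → ℝ)) : ℕ → ℕ → ℝ
  | 0, _ => p.1
  | n + 1, k =>
    if k ≤ n then hist p n k
    else a * hist p n n
      + f1 n (fun i => hist p n i + p.2.2.1 i)
      + f2 n (fun i => hist p n i + p.2.2.2 i)
      + p.2.1 n

def solX (p : ℝ × (ℕ → ℝ) × (ℕ → ℝ) × (ℕ → ℝ)) (n : ℕ) : ℝ := hist a f1 f2 p n n

def solU1 (p : ℝ × (ℕ → ℝ) × (ℕ → ℝ) × (ℕ → ℝ)) (n : ℕ) : ℝ :=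
  f1 n (fun i : Fin (n + 1) => solX a f1 f2 p i + p.2.2.1 i)

def solU2 (p : ℝ × (ℕ → ℝ) × (ℕ → ℝ) × (ℕ → ℝ)) (n : ℕ) : ℝ :=
  f2 n (fun i : Fin (n + 1) => solX a f1 f2 p i + p.2.2.2 i)

lemma hist_eq (p : ℝ × (ℕ → ℝ) × (ℕ → ℝ) × (ℕ → ℝ)) :
    ∀ n k, k ≤ n → hist a f1 f2 p n k = solX a f1 f2 p k := by
  intro n
  induction n with
  | zero => intro k hk; interval_cases k; rfl
  | succ n ih =>
    intro k hk
    rcases Nat.lt_succ_iff_lt_or_eq.1 (Nat.lt_succ_of_le hk) with h | h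
    · have hk' : k ≤ n := Nat.lt_succ_iff.1 h
      rw [show hist a f1 f2 p (n + 1) k = hist a f1 f2 p n k from if_pos hk']
      exact ih k hk'
    · subst h; rfl

lemma solX_zero (p : ℝ × (ℕ → ℝ) × (ℕ → ℝ) × (ℕ → ℝ)) : solX a f1 f2 p 0 = p.1 := rfl

lemma solX_succ (p : ℝ × (ℕ → ℝ) × (ℕ → ℝ) × (ℕ → ℝ)) (n : ℕ) :
    solX a f1 f2 p (n + 1)
      = a * solX a f1 f2 p n + solU1 a f1 f2 p n + solU2 a f1 f2 p n + p.2.1 n := by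
  have h0 : solX a f1 f2 p (n + 1)
      = if n + 1 ≤ n then hist a f1 f2 p n (n + 1)
        else a * hist a f1 f2 p n n
          + f1 n (fun i => hist a f1 f2 p n i + p.2.2.1 i)
          + f2 n (fun i => hist a f1 f2 p n i + p.2.2.2 i)
          + p.2.1 n := rfl
  rw [h0, if_neg (by omega)]
  rw [hist_eq a f1 f2 p n n le_rfl]
  unfold solU1 solU2
  congr 3
  · congr 1
    funext i
    rw [hist_eq a f1 f2 p n i (Nat.lt_succ_iff.1 i.isLt)]
  · congr 1
    funext i
    rw [hist_eq a f1 f2 p n i (Nat.lt_succ_iff.1 i.isLt)]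

lemma measurable_hist (hf1 : ∀ n, Measurable (f1 n)) (hf2 : ∀ n, Measurable (f2 n)) :
    ∀ n k, Measurable (fun p : ℝ × (ℕ → ℝ) × (ℕ → ℝ) × (ℕ → ℝ) => hist a f1 f2 p n k) := by
  intro n
  induction n with
  | zero => intro k; exact measurable_fst
  | succ n ih =>
    intro k
    have hW : ∀ i : ℕ, Measurable (fun p : ℝ × (ℕ → ℝ) × (ℕ → ℝ) × (ℕ → ℝ) => p.2.1 i) :=
      fun i => (measurable_pi_apply i).comp (measurable_fst.comp measurable_snd)
    have hV1 : ∀ i : ℕ, Measurable (fun p : ℝ × (ℕ → ℝ) × (ℕ → ℝ) × (ℕ → ℝ) => p.2.2.1 i) :=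
      fun i => (measurable_pi_apply i).comp
        (measurable_fst.comp (measurable_snd.comp measurable_snd))
    have hV2 : ∀ i : ℕ, Measurable (fun p : ℝ × (ℕ → ℝ) × (ℕ → ℝ) × (ℕ → ℝ) => p.2.2.2 i) :=
      fun i => (measurable_pi_apply i).comp
        (measurable_snd.comp (measurable_snd.comp measurable_snd))
    have hbody : Measurable (fun p : ℝ × (ℕ → ℝ) × (ℕ → ℝ) × (ℕ → ℝ) =>
        a * hist a f1 f2 p n n
          + f1 n (fun i => hist a f1 f2 p n i + p.2.2.1 i)
          + f2 n (fun i => hist a f1 f2 p n i + p.2.2.2 i)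
          + p.2.1 n) := by
      refine (((ih n).const_mul a).add ?_).add ?_ |>.add (hW n)
      · exact (hf1 n).comp (measurable_pi_lambda _ fun i => (ih i).add (hV1 i))
      · exact (hf2 n).comp (measurable_pi_lambda _ fun i => (ih i).add (hV2 i))
    by_cases h : k ≤ n
    · have : (fun p : ℝ × (ℕ → ℝ) × (ℕ → ℝ) × (ℕ → ℝ) => hist a f1 f2 p (n + 1) k)
          = fun p => hist a f1 f2 p n k := by
        funext p; exact if_pos h
      rw [this]; exact ih k
    · have : (fun p : ℝ × (ℕ → ℝ) × (ℕ → ℝ) × (ℕ → ℝ) => hist a f1 f2 p (n + 1) k)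
          = fun p => a * hist a f1 f2 p n n
            + f1 n (fun i => hist a f1 f2 p n i + p.2.2.1 i)
            + f2 n (fun i => hist a f1 f2 p n i + p.2.2.2 i)
            + p.2.1 n := by
        funext p; exact if_neg h
      rw [this]; exact hbody

lemma measurable_solX (hf1 : ∀ n, Measurable (f1 n)) (hf2 : ∀ n, Measurable (f2 n)) (n : ℕ) :
    Measurable (fun p : ℝ × (ℕ → ℝ) × (ℕ → ℝ) × (ℕ → ℝ) => solX a f1 f2 p n) :=
  measurable_hist a f1 f2 hf1 hf2 n n

lemma measurable_solU1 (hf1 : ∀ n, Measurable (f1 n)) (hf2 : ∀ n, Measurable (f2 n)) (n : ℕ) :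
    Measurable (fun p : ℝ × (ℕ → ℝ) × (ℕ → ℝ) × (ℕ → ℝ) => solU1 a f1 f2 p n) :=
  (hf1 n).comp (measurable_pi_lambda _ fun i =>
    (measurable_solX a f1 f2 hf1 hf2 i).add ((measurable_pi_apply (i : ℕ)).comp
      (measurable_fst.comp (measurable_snd.comp measurable_snd))))

lemma measurable_solU2 (hf1 : ∀ n, Measurable (f1 n)) (hf2 : ∀ n, Measurable (f2 n)) (n : ℕ) :
    Measurable (fun p : ℝ × (ℕ → ℝ) × (ℕ → ℝ) × (ℕ → ℝ) => solU2 a f1 f2 p n) :=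
  (hf2 n).comp (measurable_pi_lambda _ fun i =>
    (measurable_solX a f1 f2 hf1 hf2 i).add ((measurable_pi_apply (i : ℕ)).comp
      (measurable_snd.comp (measurable_snd.comp measurable_snd))))

end Sol

end LQG

/-- Monotonicity of the optimal finite-horizon cost in the initial
state (genie lemma): if `ξ'` and `ξ''` are independent square-integrable random
variables with `E[ξ'] = 0`, both independent of the mutually independent i.i.d. Gaussian
noise sequences, then for every horizon `N ≥ 1` and all weights `q, r1, r2 ≥ 0`,
the optimal finite-horizon cost with initial state `ξ' + ξ''` is at least the optimal
finite-horizon cost with initial state `ξ'`. -/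
theorem statement18 (Ω : Type) [MeasurableSpace Ω] (μ : Measure Ω) [IsProbabilityMeasure μ]
    (a q r1 r2 σv1 σv2 : ℝ) (ξ' ξ'' : Ω → ℝ) (w v1 v2 : ℕ → Ω → ℝ)
    (hq : 0 ≤ q) (hr1 : 0 ≤ r1) (hr2 : 0 ≤ r2)
    (hmξ' : Measurable ξ') (hmξ'' : Measurable ξ'')
    (hL2ξ' : MeasureTheory.MemLp ξ' 2 μ) (hL2ξ'' : MeasureTheory.MemLp ξ'' 2 μ)
    (hmean : ∫ ω, ξ' ω ∂μ = 0)
    (hmw : ∀ n, Measurable (w n)) (hmv1 : ∀ n, Measurable (v1 n))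
    (hmv2 : ∀ n, Measurable (v2 n))
    (hw : ∀ n, Measure.map (w n) μ = gaussianReal 0 1)
    (hv1 : ∀ n, Measure.map (v1 n) μ = gaussianReal 0 (Real.toNNReal (σv1 ^ 2)))
    (hv2 : ∀ n, Measure.map (v2 n) μ = gaussianReal 0 (Real.toNNReal (σv2 ^ 2)))
    (hindep : iIndepFun (LQG.genieFamily ξ' ξ'' w v1 v2) μ) :
    ∀ N : ℕ, 1 ≤ N →
      sInf (LQG.finCostSet μ a q r1 r2 N ξ' w v1 v2) ≤
        sInf (LQG.finCostSet μ a q r1 r2 N (fun ω => ξ' ω + ξ'' ω) w v1 v2) := by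
  classical
  intro N hN
  refine le_sInf fun J hJ => ?_
  obtain ⟨x, u1, u2, y1, y2, cl, rfl⟩ := hJ
  -- extract strategies
  obtain ⟨f1, hf1, hu1⟩ : ∃ f1 : (n : ℕ) → (Fin (n + 1) → ℝ) → ℝ,
      (∀ n, Measurable (f1 n)) ∧ ∀ n ω, u1 n ω = f1 n (fun i => y1 i ω) :=
    ⟨fun n => (cl.causal1 n).choose, fun n => (cl.causal1 n).choose_spec.1,
      fun n ω => (cl.causal1 n).choose_spec.2 ω⟩
  obtain ⟨f2, hf2, hu2⟩ : ∃ f2 : (n : ℕ) → (Fin (n + 1) → ℝ) → ℝ,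
      (∀ n, Measurable (f2 n)) ∧ ∀ n ω, u2 n ω = f2 n (fun i => y2 i ω) :=
    ⟨fun n => (cl.causal2 n).choose, fun n => (cl.causal2 n).choose_spec.1,
      fun n ω => (cl.causal2 n).choose_spec.2 ω⟩
  -- primitive randomness
  obtain ⟨prim, hprim, hprim1, hprimW, hprimV1, hprimV2⟩ :
      ∃ prim : Ω → ℝ × (ℕ → ℝ) × (ℕ → ℝ) × (ℕ → ℝ), Measurable prim ∧
        (∀ ω, (prim ω).1 = ξ' ω) ∧ (∀ ω i, (prim ω).2.1 i = w i ω) ∧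
        (∀ ω i, (prim ω).2.2.1 i = v1 i ω) ∧ (∀ ω i, (prim ω).2.2.2 i = v2 i ω) := by
    refine ⟨fun ω => (ξ' ω, fun i => w i ω, fun i => v1 i ω, fun i => v2 i ω), ?_,
      fun ω => rfl, fun ω i => rfl, fun ω i => rfl, fun ω i => rfl⟩
    exact hmξ'.prodMk ((measurable_pi_lambda _ fun i => hmw i).prodMk
      ((measurable_pi_lambda _ fun i => hmv1 i).prodMk
        (measurable_pi_lambda _ fun i => hmv2 i)))
  obtain ⟨shift, hshiftm, hshift1, hshift2⟩ :
      ∃ shift : ℝ × (ℝ × (ℕ → ℝ) × (ℕ → ℝ) × (ℕ → ℝ)) → ℝ × (ℕ → ℝ) × (ℕ → ℝ) × (ℕ → ℝ),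
        Measurable shift ∧ (∀ qq, (shift qq).1 = qq.2.1 + qq.1) ∧
          (∀ qq, (shift qq).2 = qq.2.2) :=
    ⟨fun qq => (qq.2.1 + qq.1, qq.2.2),
      ((measurable_fst.comp measurable_snd).add measurable_fst).prodMk
        (measurable_snd.comp measurable_snd), fun qq => rfl, fun qq => rfl⟩
  -- representation of the closed loop through the solution map
  have hx : ∀ n, ∀ ω, x n ω = LQG.solX a f1 f2 (shift (ξ'' ω, prim ω)) n := by
    intro n
    induction n using Nat.strong_induction_on with
    | _ n ih =>
      cases n with
      | zero =>
        intro ω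
        rw [cl.init ω, LQG.solX_zero, hshift1, hprim1]
      | succ k =>
        intro ω
        rw [cl.dyn k ω, LQG.solX_succ]
        have h1 : u1 k ω = LQG.solU1 a f1 f2 (shift (ξ'' ω, prim ω)) k := by
          rw [hu1 k ω, LQG.solU1]
          congr 1
          funext i
          rw [cl.obs1 i ω, ih i i.isLt ω, hshift2]
          simp [hprimV1]
        have h2 : u2 k ω = LQG.solU2 a f1 f2 (shift (ξ'' ω, prim ω)) k := by
          rw [hu2 k ω, LQG.solU2]
          congr 1
          funext i
          rw [cl.obs2 i ω, ih i i.isLt ω, hshift2]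
          simp [hprimV2]
        rw [h1, h2, ih k (Nat.lt_succ_self k) ω, hshift2]
        simp [hprimW]
  have hu1rep : ∀ n ω, u1 n ω = LQG.solU1 a f1 f2 (shift (ξ'' ω, prim ω)) n := by
    intro n ω
    rw [hu1 n ω, LQG.solU1]
    congr 1
    funext i
    rw [cl.obs1 i ω, hx i ω, hshift2]
    simp [hprimV1]
  have hu2rep : ∀ n ω, u2 n ω = LQG.solU2 a f1 f2 (shift (ξ'' ω, prim ω)) n := by
    intro n ω
    rw [hu2 n ω, LQG.solU2]
    congr 1
    funext i
    rw [cl.obs2 i ω, hx i ω, hshift2]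
    simp [hprimV2]
  -- independence of ξ'' from the rest
  have hmeas_gf : ∀ j, Measurable (LQG.genieFamily ξ' ξ'' w v1 v2 j) := by
    rintro (b | ⟨i, k⟩)
    · rcases b with _ | _
      · simpa [LQG.genieFamily] using hmξ''
      · simpa [LQG.genieFamily] using hmξ'
    · fin_cases k
      · simpa [LQG.genieFamily] using hmw i
      · simpa [LQG.genieFamily] using hmv1 i
      · simpa [LQG.genieFamily] using hmv2 i
  have hiI := hindep.iIndep
  have hsup := indep_biSup_compl (fun j => (hmeas_gf j).comap_le) hiI {Sum.inl false}
  have hle1 : MeasurableSpace.comap ξ'' inferInstance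
      ≤ ⨆ j ∈ ({Sum.inl false} : Set (Bool ⊕ (ℕ × Fin 3))),
        MeasurableSpace.comap (LQG.genieFamily ξ' ξ'' w v1 v2 j) inferInstance := by
    refine le_trans ?_ (le_biSup _ (Set.mem_singleton _))
    have : LQG.genieFamily ξ' ξ'' w v1 v2 (Sum.inl false) = ξ'' := by
      simp [LQG.genieFamily]
    rw [this]
  have hle2 : MeasurableSpace.comap prim inferInstance
      ≤ ⨆ j ∈ ({Sum.inl false} : Set (Bool ⊕ (ℕ × Fin 3)))ᶜ,
        MeasurableSpace.comap (LQG.genieFamily ξ' ξ'' w v1 v2 j) inferInstance := by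
    set M := ⨆ j ∈ ({Sum.inl false} : Set (Bool ⊕ (ℕ × Fin 3)))ᶜ,
        MeasurableSpace.comap (LQG.genieFamily ξ' ξ'' w v1 v2 j) inferInstance with hM
    have hcomp : ∀ j, j ∈ ({Sum.inl false} : Set (Bool ⊕ (ℕ × Fin 3)))ᶜ →
        @Measurable Ω ℝ M _ (LQG.genieFamily ξ' ξ'' w v1 v2 j) :=
      fun j hjmem => Measurable.of_comap_le ((le_biSup _ hjmem).trans hM.ge)
    refine Measurable.comap_le ?_
    have hprimeq : prim = fun ω =>
        ((ξ' ω : ℝ), (fun i => w i ω : ℕ → ℝ), (fun i => v1 i ω : ℕ → ℝ),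
          (fun i => v2 i ω : ℕ → ℝ)) := by
      funext ω
      exact Prod.ext (hprim1 ω) (Prod.ext (funext (hprimW ω))
        (Prod.ext (funext (hprimV1 ω)) (funext (hprimV2 ω))))
    rw [hprimeq]
    have hxi' : @Measurable Ω ℝ M _ ξ' := by
      have h : LQG.genieFamily ξ' ξ'' w v1 v2 (Sum.inl true) = ξ' := by simp [LQG.genieFamily]
      exact h ▸ hcomp (Sum.inl true) (by simp)
    have hwM : ∀ i : ℕ, @Measurable Ω ℝ M _ (w i) := by
      intro i
      have h : LQG.genieFamily ξ' ξ'' w v1 v2 (Sum.inr (i, 0)) = w i := by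
        simp [LQG.genieFamily]
      exact h ▸ hcomp (Sum.inr (i, 0)) (by simp)
    have hv1M : ∀ i : ℕ, @Measurable Ω ℝ M _ (v1 i) := by
      intro i
      have h : LQG.genieFamily ξ' ξ'' w v1 v2 (Sum.inr (i, 1)) = v1 i := by
        simp [LQG.genieFamily]
      exact h ▸ hcomp (Sum.inr (i, 1)) (by simp)
    have hv2M : ∀ i : ℕ, @Measurable Ω ℝ M _ (v2 i) := by
      intro i
      have h : LQG.genieFamily ξ' ξ'' w v1 v2 (Sum.inr (i, 2)) = v2 i := by
        simp [LQG.genieFamily]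
      exact h ▸ hcomp (Sum.inr (i, 2)) (by simp)
    exact Measurable.prodMk hxi' (Measurable.prodMk
      (measurable_pi_lambda _ fun i => hwM i)
      (Measurable.prodMk (measurable_pi_lambda _ fun i => hv1M i)
        (measurable_pi_lambda _ fun i => hv2M i)))
  have hind : IndepFun ξ'' prim μ :=
    indep_of_indep_of_le_right (indep_of_indep_of_le_left hsup hle1) hle2
  have hmapprod : μ.map (fun ω => (ξ'' ω, prim ω)) = (μ.map ξ'').prod (μ.map prim) :=
    (indepFun_iff_map_prod_eq_prod_map_map hmξ''.aemeasurable hprim.aemeasurable).mp hind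
  haveI hPprob : IsProbabilityMeasure (μ.map ξ'') := Measure.isProbabilityMeasure_map hmξ''.aemeasurable
  haveI : IsProbabilityMeasure (μ.map prim) := Measure.isProbabilityMeasure_map hprim.aemeasurable
  -- Fubini exchange
  have hfub : ∀ G : ℝ × (ℝ × (ℕ → ℝ) × (ℕ → ℝ) × (ℕ → ℝ)) → ℝ≥0∞, Measurable G →
      ∫⁻ ω, G (ξ'' ω, prim ω) ∂μ = ∫⁻ c, ∫⁻ ω, G (c, prim ω) ∂μ ∂(μ.map ξ'') := by
    intro G hG
    rw [← lintegral_map hG (hmξ''.prodMk hprim), hmapprod, lintegral_prod _ hG.aemeasurable]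
    refine lintegral_congr fun c => ?_
    exact lintegral_map (hG.comp measurable_prodMk_left) hprim
  have master : ∀ F : (ℝ × (ℕ → ℝ) × (ℕ → ℝ) × (ℕ → ℝ)) → ℝ, Measurable F →
      (LQG.sqE μ (fun ω => F (shift (ξ'' ω, prim ω)))
          = ∫⁻ c, LQG.sqE μ (fun ω => F (shift (c, prim ω))) ∂(μ.map ξ''))
        ∧ Measurable (fun c => LQG.sqE μ (fun ω => F (shift (c, prim ω)))) := by
    intro F hF
    have hG : Measurable (fun qq : ℝ × (ℝ × (ℕ → ℝ) × (ℕ → ℝ) × (ℕ → ℝ)) =>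
        ENNReal.ofReal ((F (shift qq)) ^ 2)) :=
      (((hF.comp hshiftm).pow_const 2)).ennreal_ofReal
    constructor
    · exact hfub _ hG
    · have heq : (fun c => LQG.sqE μ (fun ω => F (shift (c, prim ω))))
          = fun c => ∫⁻ y, (fun qq : ℝ × (ℝ × (ℕ → ℝ) × (ℕ → ℝ) × (ℕ → ℝ)) =>
              ENNReal.ofReal ((F (shift qq)) ^ 2)) (c, y) ∂(μ.map prim) := by
        funext c
        exact (lintegral_map (hG.comp measurable_prodMk_left) hprim).symm
      rw [heq]
      exact hG.lintegral_prod_right'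
  -- exchanging the cost with the genie integral
  have hsqx : ∀ n, LQG.sqE μ (x n)
      = ∫⁻ c, LQG.sqE μ (fun ω => LQG.solX a f1 f2 (shift (c, prim ω)) n) ∂(μ.map ξ'') := by
    intro n
    rw [show x n = fun ω => LQG.solX a f1 f2 (shift (ξ'' ω, prim ω)) n from funext (hx n)]
    exact (master _ (LQG.measurable_solX a f1 f2 hf1 hf2 n)).1
  have hsq1 : ∀ n, LQG.sqE μ (u1 n)
      = ∫⁻ c, LQG.sqE μ (fun ω => LQG.solU1 a f1 f2 (shift (c, prim ω)) n) ∂(μ.map ξ'') := by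
    intro n
    rw [show u1 n = fun ω => LQG.solU1 a f1 f2 (shift (ξ'' ω, prim ω)) n from funext (hu1rep n)]
    exact (master _ (LQG.measurable_solU1 a f1 f2 hf1 hf2 n)).1
  have hsq2 : ∀ n, LQG.sqE μ (u2 n)
      = ∫⁻ c, LQG.sqE μ (fun ω => LQG.solU2 a f1 f2 (shift (c, prim ω)) n) ∂(μ.map ξ'') := by
    intro n
    rw [show u2 n = fun ω => LQG.solU2 a f1 f2 (shift (ξ'' ω, prim ω)) n from funext (hu2rep n)]
    exact (master _ (LQG.measurable_solU2 a f1 f2 hf1 hf2 n)).1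
  have hmx : ∀ n, Measurable (fun c =>
      LQG.sqE μ (fun ω => LQG.solX a f1 f2 (shift (c, prim ω)) n)) :=
    fun n => (master _ (LQG.measurable_solX a f1 f2 hf1 hf2 n)).2
  have hmu1 : ∀ n, Measurable (fun c =>
      LQG.sqE μ (fun ω => LQG.solU1 a f1 f2 (shift (c, prim ω)) n)) :=
    fun n => (master _ (LQG.measurable_solU1 a f1 f2 hf1 hf2 n)).2
  have hmu2 : ∀ n, Measurable (fun c =>
      LQG.sqE μ (fun ω => LQG.solU2 a f1 f2 (shift (c, prim ω)) n)) :=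
    fun n => (master _ (LQG.measurable_solU2 a f1 f2 hf1 hf2 n)).2
  have hTmeas : ∀ n, Measurable (fun c =>
      ENNReal.ofReal q * LQG.sqE μ (fun ω => LQG.solX a f1 f2 (shift (c, prim ω)) n)
        + ENNReal.ofReal r1 * LQG.sqE μ (fun ω => LQG.solU1 a f1 f2 (shift (c, prim ω)) n)
        + ENNReal.ofReal r2 * LQG.sqE μ (fun ω => LQG.solU2 a f1 f2 (shift (c, prim ω)) n)) :=
    fun n => (((hmx n).const_mul _).add ((hmu1 n).const_mul _)).add ((hmu2 n).const_mul _)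
  have hcost : LQG.finCost μ q r1 r2 N x u1 u2
      = ∫⁻ c, LQG.finCost μ q r1 r2 N
          (fun n ω => LQG.solX a f1 f2 (shift (c, prim ω)) n)
          (fun n ω => LQG.solU1 a f1 f2 (shift (c, prim ω)) n)
          (fun n ω => LQG.solU2 a f1 f2 (shift (c, prim ω)) n) ∂(μ.map ξ'') := by
    unfold LQG.finCost
    have hsum : ∑ n ∈ Finset.range N,
        (ENNReal.ofReal q * LQG.sqE μ (x n) + ENNReal.ofReal r1 * LQG.sqE μ (u1 n)
          + ENNReal.ofReal r2 * LQG.sqE μ (u2 n))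
        = ∫⁻ c, ∑ n ∈ Finset.range N,
            (ENNReal.ofReal q * LQG.sqE μ (fun ω => LQG.solX a f1 f2 (shift (c, prim ω)) n)
              + ENNReal.ofReal r1 * LQG.sqE μ (fun ω => LQG.solU1 a f1 f2 (shift (c, prim ω)) n)
              + ENNReal.ofReal r2 * LQG.sqE μ (fun ω => LQG.solU2 a f1 f2 (shift (c, prim ω)) n))
            ∂(μ.map ξ'') := by
      rw [lintegral_finset_sum _ fun n _ => hTmeas n]
      refine Finset.sum_congr rfl fun n _ => ?_
      rw [hsqx n, hsq1 n, hsq2 n,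
        lintegral_add_left (f := fun c =>
          ENNReal.ofReal q * LQG.sqE μ (fun ω => LQG.solX a f1 f2 (shift (c, prim ω)) n)
            + ENNReal.ofReal r1 * LQG.sqE μ (fun ω => LQG.solU1 a f1 f2 (shift (c, prim ω)) n))
          (((hmx n).const_mul _).add ((hmu1 n).const_mul _)),
        lintegral_add_left ((hmx n).const_mul _),
        lintegral_const_mul _ (hmx n), lintegral_const_mul _ (hmu1 n),
        lintegral_const_mul _ (hmu2 n)]
    rw [hsum]
    simp_rw [div_eq_mul_inv]
    rw [lintegral_mul_const' _ _
      (ENNReal.inv_ne_top.mpr (Nat.cast_ne_zero.mpr (Nat.one_le_iff_ne_zero.mp hN)))]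
  -- pick a good genie value c
  have hFC : Measurable (fun cc : ℝ => (∑ n ∈ Finset.range N,
      (ENNReal.ofReal q * LQG.sqE μ (fun ω => LQG.solX a f1 f2 (shift (cc, prim ω)) n)
        + ENNReal.ofReal r1 * LQG.sqE μ (fun ω => LQG.solU1 a f1 f2 (shift (cc, prim ω)) n)
        + ENNReal.ofReal r2 * LQG.sqE μ (fun ω => LQG.solU2 a f1 f2 (shift (cc, prim ω)) n)))
      / (N : ℝ≥0∞)) := by
    simp_rw [div_eq_mul_inv]
    exact (Finset.measurable_sum _ fun n _ => hTmeas n).mul_const _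
  have hFCae : AEMeasurable (fun cc : ℝ => LQG.finCost μ q r1 r2 N
      (fun n ω => LQG.solX a f1 f2 (shift (cc, prim ω)) n)
      (fun n ω => LQG.solU1 a f1 f2 (shift (cc, prim ω)) n)
      (fun n ω => LQG.solU2 a f1 f2 (shift (cc, prim ω)) n)) (μ.map ξ'') := by
    have heqFC : (fun cc : ℝ => LQG.finCost μ q r1 r2 N
        (fun n ω => LQG.solX a f1 f2 (shift (cc, prim ω)) n)
        (fun n ω => LQG.solU1 a f1 f2 (shift (cc, prim ω)) n)
        (fun n ω => LQG.solU2 a f1 f2 (shift (cc, prim ω)) n))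
        = fun cc : ℝ => (∑ n ∈ Finset.range N,
          (ENNReal.ofReal q * LQG.sqE μ (fun ω => LQG.solX a f1 f2 (shift (cc, prim ω)) n)
            + ENNReal.ofReal r1 * LQG.sqE μ (fun ω => LQG.solU1 a f1 f2 (shift (cc, prim ω)) n)
            + ENNReal.ofReal r2 * LQG.sqE μ (fun ω => LQG.solU2 a f1 f2 (shift (cc, prim ω)) n)))
          / (N : ℝ≥0∞) := rfl
    rw [heqFC]
    exact hFC.aemeasurable
  obtain ⟨c, hc⟩ := LQG.exists_le_lintegral (μ.map ξ'') hFCae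
  rw [← hcost] at hc
  -- the centered system with initial state ξ'
  have hmain : ∀ xc uc1 uc2 : ℕ → Ω → ℝ,
      (∀ n, Measurable (xc n)) → (∀ n, Measurable (uc1 n)) → (∀ n, Measurable (uc2 n)) →
      (∀ ω, xc 0 ω = ξ' ω + c) →
      (∀ n ω, xc (n + 1) ω = a * xc n ω + uc1 n ω + uc2 n ω + w n ω) →
      (∀ n ω, uc1 n ω = f1 n (fun i => xc i ω + v1 i ω)) →
      (∀ n ω, uc2 n ω = f2 n (fun i => xc i ω + v2 i ω)) →
      sInf (LQG.finCostSet μ a q r1 r2 N ξ' w v1 v2) ≤ LQG.finCost μ q r1 r2 N xc uc1 uc2 := by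
    intro xc uc1 uc2 hxm hum1 hum2 hinit hdyn hucr1 hucr2
    obtain ⟨β1, hβ1⟩ : ∃ β1 : ℕ → ℝ, ∀ n, β1 n = -∫ ω, uc1 n ω ∂μ := ⟨_, fun n => rfl⟩
    obtain ⟨β2, hβ2⟩ : ∃ β2 : ℕ → ℝ,
        ∀ n, β2 n = (∫ ω, uc1 n ω ∂μ) - ∫ ω, (uc1 n ω + uc2 n ω) ∂μ := ⟨_, fun n => rfl⟩
    obtain ⟨m, hm0, hmsucc⟩ : ∃ m : ℕ → ℝ, m 0 = c ∧ ∀ n, m (n + 1) = a * m n - β1 n - β2 n :=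
      ⟨fun n => Nat.rec c (fun k mk => a * mk - β1 k - β2 k) n, rfl, fun n => rfl⟩
    have hcl : LQG.ClosedLoop a ξ' w v1 v2 (fun n ω => xc n ω - m n)
        (fun n ω => uc1 n ω + β1 n) (fun n ω => uc2 n ω + β2 n)
        (fun n ω => (xc n ω - m n) + v1 n ω) (fun n ω => (xc n ω - m n) + v2 n ω) := by
      refine ⟨fun ω => ?_, fun n ω => ?_, fun n ω => rfl, fun n ω => rfl, ?_, ?_⟩
      · beta_reduce
        rw [hinit ω, hm0]; ring
      · beta_reduce
        rw [hdyn n ω, hmsucc n]; ring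
      · intro n
        refine ⟨fun v => f1 n (fun i => v i + m i) + β1 n, ?_, fun ω => ?_⟩
        · exact Measurable.add_const ((hf1 n).comp (measurable_pi_lambda _ fun i =>
            by fun_prop)) (β1 n)
        · beta_reduce
          rw [hucr1 n ω]
          have heq1 : (fun i : Fin (n + 1) => (xc i ω - m i + v1 i ω) + m i)
              = fun i : Fin (n + 1) => xc i ω + v1 i ω := funext fun i => by ring
          rw [heq1]
      · intro n
        refine ⟨fun v => f2 n (fun i => v i + m i) + β2 n, ?_, fun ω => ?_⟩
        · exact Measurable.add_const ((hf2 n).comp (measurable_pi_lambda _ fun i =>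
            by fun_prop)) (β2 n)
        · beta_reduce
          rw [hucr2 n ω]
          have heq2 : (fun i : Fin (n + 1) => (xc i ω - m i + v2 i ω) + m i)
              = fun i : Fin (n + 1) => xc i ω + v2 i ω := funext fun i => by ring
          rw [heq2]
    refine le_trans (sInf_le ⟨_, _, _, _, _, hcl, rfl⟩) ?_
    -- cost comparison
    rcases eq_top_or_lt_top (LQG.finCost μ q r1 r2 N xc uc1 uc2) with htop | hlt
    · rw [htop]; exact le_top
    · have hsumne : ∑ n ∈ Finset.range N,
          (ENNReal.ofReal q * LQG.sqE μ (xc n) + ENNReal.ofReal r1 * LQG.sqE μ (uc1 n)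
            + ENNReal.ofReal r2 * LQG.sqE μ (uc2 n)) ≠ ⊤ := by
        intro hs
        have hNne : ((N : ℝ≥0∞)) ≠ ⊤ := by simp
        have : LQG.finCost μ q r1 r2 N xc uc1 uc2 = ⊤ := by
          unfold LQG.finCost
          rw [hs]
          exact ENNReal.div_eq_top.mpr (Or.inr ⟨rfl, hNne⟩)
        rw [this] at hlt
        exact absurd hlt (lt_irrefl _)
      have hxfin : 0 < q → ∀ n, n < N → LQG.sqE μ (xc n) ≠ ⊤ := by
        intro hq' n hn
        intro hsqtop
        have hterm : ENNReal.ofReal q * LQG.sqE μ (xc n) + ENNReal.ofReal r1 * LQG.sqE μ (uc1 n)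
            + ENNReal.ofReal r2 * LQG.sqE μ (uc2 n) ≠ ⊤ :=
          ne_top_of_le_ne_top hsumne (Finset.single_le_sum
            (f := fun k => ENNReal.ofReal q * LQG.sqE μ (xc k)
              + ENNReal.ofReal r1 * LQG.sqE μ (uc1 k)
              + ENNReal.ofReal r2 * LQG.sqE μ (uc2 k))
            (fun i _ => zero_le) (Finset.mem_range.2 hn))
        refine hterm ?_
        rw [hsqtop, ENNReal.mul_top (by simpa [ENNReal.ofReal_eq_zero] using hq' : ENNReal.ofReal q ≠ 0)]
        simp
      have hmean_m : 0 < q → ∀ n, n < N → m n = ∫ ω, xc n ω ∂μ := by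
        intro hq' n
        induction n with
        | zero =>
          intro _
          rw [hm0, show xc 0 = fun ω => ξ' ω + c from funext hinit,
            integral_add (hL2ξ'.integrable one_le_two) (integrable_const c), hmean,
            integral_const]
          simp
        | succ n ih =>
          intro hn1
          have hn : n < N := Nat.lt_of_succ_lt hn1
          have hintn : Integrable (xc n) μ :=
            (LQG.memℒp_two_of_sqE_ne_top (hxm n).aestronglyMeasurable
              (hxfin hq' n hn)).integrable one_le_two
          have hintn1 : Integrable (xc (n + 1)) μ :=
            (LQG.memℒp_two_of_sqE_ne_top (hxm (n + 1)).aestronglyMeasurable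
              (hxfin hq' (n + 1) hn1)).integrable one_le_two
          have hintw : Integrable (w n) μ := LQG.integrable_of_gauss01 (hmw n) (hw n)
          have hsumf : (fun ω => uc1 n ω + uc2 n ω)
              = fun ω => xc (n + 1) ω - a * xc n ω - w n ω :=
            funext fun ω => by rw [hdyn n ω]; ring
          have hsint : ∫ ω, (uc1 n ω + uc2 n ω) ∂μ
              = ∫ ω, xc (n + 1) ω ∂μ - a * ∫ ω, xc n ω ∂μ := by
            have hA : Integrable (fun ω => xc (n + 1) ω - a * xc n ω) μ :=
              hintn1.sub (hintn.const_mul a)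
            have hB : Integrable (fun ω => a * xc n ω) μ := hintn.const_mul a
            rw [hsumf, integral_sub hA hintw, integral_sub hintn1 hB, integral_const_mul,
              LQG.integral_of_gauss01 (hmw n) (hw n)]
            ring
          have hβsum : β1 n + β2 n = -∫ ω, (uc1 n ω + uc2 n ω) ∂μ := by
            rw [hβ1 n, hβ2 n]; ring
          have : m (n + 1) = a * m n + ∫ ω, (uc1 n ω + uc2 n ω) ∂μ := by
            rw [hmsucc n]
            have := hβsum
            linarith
          rw [this, hsint, ih hn]
          ring
      unfold LQG.finCost
      refine ENNReal.div_le_div_right (Finset.sum_le_sum fun n hn => ?_) _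
      have hnN : n < N := Finset.mem_range.1 hn
      refine add_le_add (add_le_add ?_ ?_) ?_
      · -- state term
        beta_reduce
        rcases eq_or_lt_of_le hq with hq0 | hq'
        · rw [← hq0]; simp
        · refine mul_le_mul_right ?_ _
          have hcen := LQG.center_le (μ := μ) (f := xc n) (hxm n).aestronglyMeasurable
          rw [← hmean_m hq' n hnN] at hcen
          exact hcen
      · -- input 1 term
        beta_reduce
        refine mul_le_mul_right ?_ _
        have hcen := LQG.center_le (μ := μ) (f := uc1 n) (hum1 n).aestronglyMeasurable
        have heq : (fun ω => uc1 n ω + β1 n) = fun ω => uc1 n ω - ∫ x, uc1 n x ∂μ :=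
          funext fun ω => by rw [hβ1 n]; ring
        rw [heq]
        exact hcen
      · -- input 2 term
        beta_reduce
        refine mul_le_mul_right ?_ _
        have hcen := LQG.center2_le (μ := μ) (g := uc1 n) (h := uc2 n)
          (hum1 n).aestronglyMeasurable (hum2 n).aestronglyMeasurable
        have heq : (fun ω => uc2 n ω + β2 n)
            = fun ω => uc2 n ω + ((∫ x, uc1 n x ∂μ) - ∫ x, (uc1 n x + uc2 n x) ∂μ) :=
          funext fun ω => by rw [hβ2 n]
        rw [heq]
        exact hcen
  refine le_trans (hmain
    (fun n ω => LQG.solX a f1 f2 (shift (c, prim ω)) n)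
    (fun n ω => LQG.solU1 a f1 f2 (shift (c, prim ω)) n)
    (fun n ω => LQG.solU2 a f1 f2 (shift (c, prim ω)) n)
    (fun n => (LQG.measurable_solX a f1 f2 hf1 hf2 n).comp
      (hshiftm.comp (measurable_const.prodMk hprim)))
    (fun n => (LQG.measurable_solU1 a f1 f2 hf1 hf2 n).comp
      (hshiftm.comp (measurable_const.prodMk hprim)))
    (fun n => (LQG.measurable_solU2 a f1 f2 hf1 hf2 n).comp
      (hshiftm.comp (measurable_const.prodMk hprim)))
    (fun ω => by beta_reduce; rw [LQG.solX_zero, hshift1, hprim1])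
    (fun n ω => by
      beta_reduce
      rw [LQG.solX_succ, hshift2]
      simp [hprimW])
    (fun n ω => by
      beta_reduce
      rw [LQG.solU1]
      congr 1
      funext i
      rw [hshift2]
      simp [hprimV1])
    (fun n ω => by
      beta_reduce
      rw [LQG.solU2]
      congr 1
      funext i
      rw [hshift2]
      simp [hprimV2])) hc
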